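/- For every integer a, the equation x^3 + y^3 + 2*z^3 = a has a solution in the 3-adic integers Z_3. -/

import Mathlib

open Polynomial

lemma cube_root_exists (b : ℤ_[3]) (h : ‖b - 1‖ < 1/9) : ∃ u : ℤ_[3], u ^ 3 = b := by
  have hnorm : ‖(X ^ 3 - C b : Polynomial ℤ_[3]).eval 1‖ <
      ‖(X ^ 3 - C b : Polynomial ℤ_[3]).derivative.eval 1‖ ^ 2 := by
    have hd : (X ^ 3 - C b : Polynomial ℤ_[3]).derivative = C 3 * X ^ 2 := by
      simp [derivative_pow]
    have h3 : ‖(3 : ℤ_[3])‖ = 1/3 := by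
      have := @PadicInt.norm_p 3 ⟨by norm_num⟩
      simpa using this
    simp only [hd, eval_mul, eval_pow, eval_C, eval_X, eval_sub, one_pow, mul_one]
    rw [h3]
    calc ‖1 - b‖ = ‖b - 1‖ := by rw [← norm_neg]; ring_nf
    _ < 1/9 := h
    _ = (1/3)^2 := by norm_num
  obtain ⟨z, hz, -⟩ := hensels_lemma hnorm
  refine ⟨z, ?_⟩
  have := hz
  simp only [map_sub, map_pow, aeval_X, aeval_C, Algebra.algebraMap_self, RingHom.id_apply, sub_eq_zero] at this
  exact this

lemma key (a y z ε : ℤ) (hε : ε = 1 ∨ ε = -1)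
    (h : (27:ℤ) ∣ ε * (a - y^3 - 2*z^3) - 1) :
    ∃ x yy zz : ℤ_[3], x ^ 3 + yy ^ 3 + 2 * zz ^ 3 = (a : ℤ_[3]) := by
  set b : ℤ := ε * (a - y^3 - 2*z^3) with hb
  have hnorm : ‖((b : ℤ_[3]) - 1)‖ < 1/9 := by
    have := (PadicInt.norm_int_le_pow_iff_dvd (p := 3) (k := b - 1) (n := 3)).mpr
      (by exact_mod_cast h)
    push_cast at this
    calc ‖(b : ℤ_[3]) - 1‖ ≤ ((3:ℕ):ℝ) ^ (-(3:ℕ) : ℤ) := this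
    _ < 1/9 := by norm_num
  obtain ⟨u, hu⟩ := cube_root_exists _ hnorm
  refine ⟨(ε : ℤ_[3]) * u, (y : ℤ_[3]), (z : ℤ_[3]), ?_⟩
  have hε2 : (ε : ℤ_[3])^3 * (ε : ℤ_[3]) = 1 := by
    rcases hε with h1 | h1 <;> subst h1 <;> push_cast <;> ring
  have : ((ε : ℤ_[3]) * u)^3 = (ε:ℤ_[3])^3 * (b : ℤ_[3]) := by rw [mul_pow, hu]
  rw [this, hb]
  push_cast
  rw [show ((ε:ℤ_[3])^3 * ((ε:ℤ_[3]) * ((a:ℤ_[3]) - (y:ℤ_[3])^3 - 2*(z:ℤ_[3])^3)))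
      = ((ε:ℤ_[3])^3 * (ε:ℤ_[3])) * ((a:ℤ_[3]) - (y:ℤ_[3])^3 - 2*(z:ℤ_[3])^3) from by ring,
    hε2]
  ring

theorem stmt_11 (a : ℤ) :
    ∃ x y z : ℤ_[3], x ^ 3 + y ^ 3 + 2 * z ^ 3 = (a : ℤ_[3]) := by
  have h0 : 0 ≤ a % 27 := Int.emod_nonneg a (by norm_num)
  have h1 : a % 27 < 27 := Int.emod_lt_of_pos a (by norm_num)
  set r := a % 27 with hr
  interval_cases r
  · exact key a (-1) 0 1 (Or.inl rfl) (by ring_nf; omega)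
  · exact key a 0 0 1 (Or.inl rfl) (by ring_nf; omega)
  · exact key a 1 0 1 (Or.inl rfl) (by ring_nf; omega)
  · exact key a 0 1 1 (Or.inl rfl) (by ring_nf; omega)
  · exact key a 1 1 1 (Or.inl rfl) (by ring_nf; omega)
  · exact key a 2 (-1) (-1) (Or.inr rfl) (by ring_nf; omega)
  · exact key a 0 (-4) (-1) (Or.inr rfl) (by ring_nf; omega)
  · exact key a 2 0 (-1) (Or.inr rfl) (by ring_nf; omega)
  · exact key a 0 (-4) 1 (Or.inl rfl) (by ring_nf; omega)
  · exact key a 2 0 1 (Or.inl rfl) (by ring_nf; omega)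
  · exact key a 0 (-2) (-1) (Or.inr rfl) (by ring_nf; omega)
  · exact key a (-1) (-2) 1 (Or.inl rfl) (by ring_nf; omega)
  · exact key a 0 (-2) 1 (Or.inl rfl) (by ring_nf; omega)
  · exact key a 1 (-2) 1 (Or.inl rfl) (by ring_nf; omega)
  · exact key a (-1) 2 (-1) (Or.inr rfl) (by ring_nf; omega)
  · exact key a 0 2 (-1) (Or.inr rfl) (by ring_nf; omega)
  · exact key a (-2) (-1) (-1) (Or.inr rfl) (by ring_nf; omega)
  · exact key a 0 2 1 (Or.inl rfl) (by ring_nf; omega)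
  · exact key a (-2) 0 (-1) (Or.inr rfl) (by ring_nf; omega)
  · exact key a 0 4 (-1) (Or.inr rfl) (by ring_nf; omega)
  · exact key a (-2) 0 1 (Or.inl rfl) (by ring_nf; omega)
  · exact key a 0 4 1 (Or.inl rfl) (by ring_nf; omega)
  · exact key a (-2) 1 1 (Or.inl rfl) (by ring_nf; omega)
  · exact key a (-1) (-1) (-1) (Or.inr rfl) (by ring_nf; omega)
  · exact key a 0 (-1) (-1) (Or.inr rfl) (by ring_nf; omega)
  · exact key a (-1) 0 (-1) (Or.inr rfl) (by ring_nf; omega)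
  · exact key a 0 0 (-1) (Or.inr rfl) (by ring_nf; omega)
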